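/- For every finite group G, the difference size satisfies (1 + √(4|G| − 3))/2 ≤ Δ[G] ≤ ⌈(|G| + 1)/2⌉. -/

import Mathlib

/-- A finset `B` is a difference basis of the group `G` if every element of `G`
can be written as `a * b⁻¹` with `a b ∈ B`. -/
def IsDiffBasis {G : Type*} [Group G] (B : Finset G) : Prop :=
  ∀ g : G, ∃ a ∈ B, ∃ b ∈ B, g = a * b⁻¹

/-- The difference size `Δ[G]` of a group `G`: the smallest cardinality of a difference basis. -/
noncomputable def diffSize (G : Type*) [Group G] : ℕ :=
  sInf {k | ∃ B : Finset G, B.card = k ∧ IsDiffBasis B}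

/-- The difference characteristic `ð[G] = Δ[G]/√|G|`. -/
noncomputable def diffChar (G : Type*) [Group G] : ℝ :=
  (diffSize G : ℝ) / Real.sqrt (Nat.card G)

theorem stmt0 (G : Type*) [Group G] [Finite G] :
    (1 + Real.sqrt (4 * (Nat.card G : ℝ) - 3)) / 2 ≤ (diffSize G : ℝ) ∧
    diffSize G ≤ ⌈((Nat.card G : ℚ) + 1) / 2⌉₊ := by
  classical
  have _inst : Fintype G := Fintype.ofFinite G
  set n := Nat.card G with hn
  have hnc : n = Fintype.card G := Nat.card_eq_fintype_card
  have hn1 : 1 ≤ n := Nat.card_pos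
  set m := ⌈((n : ℚ) + 1) / 2⌉₊ with hm
  -- upper bound: construct a basis of size m
  have hmle : m ≤ n := by
    rw [hm]
    apply Nat.ceil_le.2
    rw [div_le_iff₀ (by norm_num : (0:ℚ) < 2)]
    have : (1 : ℚ) ≤ (n : ℚ) := by exact_mod_cast hn1
    linarith
  have h2m : n + 1 ≤ 2 * m := by
    have h := Nat.le_ceil (((n : ℚ) + 1) / 2)
    rw [div_le_iff₀ (by norm_num : (0:ℚ) < 2)] at h
    have : ((n : ℚ) + 1) ≤ 2 * (m : ℚ) := by linarith
    exact_mod_cast this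
  obtain ⟨B, -, hBcard⟩ := Finset.exists_subset_card_eq (s := (Finset.univ : Finset G)) (n := m)
    (by simpa [hnc] using hmle)
  have hBbasis : IsDiffBasis B := by
    intro g
    set C := B.image (fun b => g * b) with hC
    have hCcard : C.card = m := by
      rw [hC, Finset.card_image_of_injective _ (mul_right_injective g), hBcard]
    have hunion : (B ∪ C).card ≤ n := by
      rw [hnc]
      exact Finset.card_le_card (Finset.subset_univ _) |>.trans_eq (Finset.card_univ)
    have hinter : 1 ≤ (B ∩ C).card := by
      have := Finset.card_inter_add_card_union B C
      omega
    obtain ⟨x, hx⟩ := Finset.card_pos.1 hinter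
    rw [Finset.mem_inter] at hx
    obtain ⟨hxB, hxC⟩ := hx
    rw [hC, Finset.mem_image] at hxC
    obtain ⟨b, hbB, hbx⟩ := hxC
    exact ⟨x, hxB, b, hbB, by rw [← hbx]; group⟩
  have hupper : diffSize G ≤ m := Nat.sInf_le ⟨B, hBcard, hBbasis⟩
  -- lower bound
  set k := diffSize G with hk
  have hmem : k ∈ {k | ∃ B : Finset G, B.card = k ∧ IsDiffBasis B} := by
    apply Nat.sInf_mem
    exact ⟨m, B, hBcard, hBbasis⟩
  obtain ⟨D, hDcard, hD⟩ := hmem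
  choose a ha b hb hab using hD
  have hk1 : 1 ≤ k := by
    rw [← hDcard]
    exact Finset.card_pos.2 ⟨a 1, ha 1⟩
  -- count
  have hinj : (Finset.univ.erase (1 : G)).card ≤ ((D ×ˢ D).filter (fun p => ¬ p.1 = p.2)).card := by
    apply Finset.card_le_card_of_injOn (fun x => (a x, b x))
    · intro x hx
      rw [Finset.mem_coe, Finset.mem_erase] at hx
      rw [Finset.mem_coe, Finset.mem_filter, Finset.mem_product]
      refine ⟨⟨ha x, hb x⟩, ?_⟩
      intro hne
      have hne' : a x = b x := hne
      apply hx.1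
      rw [hab x, hne', mul_inv_cancel]
    · intro x _ y _ hxy
      have h1 : a x = a y := congrArg Prod.fst hxy
      have h2 : b x = b y := congrArg Prod.snd hxy
      rw [hab x, hab y, h1, h2]
  have herase : (Finset.univ.erase (1 : G)).card = n - 1 := by
    rw [Finset.card_erase_of_mem (Finset.mem_univ _), Finset.card_univ, hnc]
  have hPcard : ((D ×ˢ D).filter (fun p => ¬ p.1 = p.2)).card = k * k - k := by
    have hsplit := Finset.card_filter_add_card_filter_not
      (s := D ×ˢ D) (p := fun p => p.1 = p.2)
    have hdiag : ((D ×ˢ D).filter (fun p => p.1 = p.2)).card = k := by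
      have : (D ×ˢ D).filter (fun p => p.1 = p.2) = D.image (fun x => (x, x)) := by
        ext p
        simp only [Finset.mem_filter, Finset.mem_product, Finset.mem_image]
        constructor
        · rintro ⟨⟨h1, h2⟩, h3⟩
          exact ⟨p.1, h1, Prod.ext rfl h3⟩
        · rintro ⟨x, hx, rfl⟩
          exact ⟨⟨hx, hx⟩, rfl⟩
      rw [this, Finset.card_image_of_injective _ (fun x y h => congrArg Prod.fst h), hDcard]
    have hprod : (D ×ˢ D).card = k * k := by rw [Finset.card_product, hDcard]
    omega
  rw [herase, hPcard] at hinj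
  have hkey : n ≤ k * k - k + 1 := by omega
  have hkk : k ≤ k * k := Nat.le_mul_of_pos_left k hk1
  have hkeyR : (n : ℝ) ≤ (k : ℝ) * k - k + 1 := by
    have : ((k * k - k + 1 : ℕ) : ℝ) = (k : ℝ) * k - k + 1 := by
      push_cast [Nat.cast_sub hkk]
      ring
    calc (n : ℝ) ≤ ((k * k - k + 1 : ℕ) : ℝ) := by exact_mod_cast hkey
      _ = _ := this
  have hkR : (1 : ℝ) ≤ k := by exact_mod_cast hk1
  constructor
  · have hsq : Real.sqrt (4 * (n : ℝ) - 3) ≤ 2 * k - 1 := by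
      have h1 : 4 * (n : ℝ) - 3 ≤ (2 * k - 1) ^ 2 := by nlinarith
      calc Real.sqrt (4 * (n : ℝ) - 3) ≤ Real.sqrt ((2 * k - 1) ^ 2) :=
            Real.sqrt_le_sqrt h1
        _ = 2 * k - 1 := Real.sqrt_sq (by linarith)
    linarith
  · exact hupper
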